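/- Let C be a stable category with a t-structure compatible with filtered colimits, and let q : C → C/C^{≤-∞} be the Verdier quotient by the full subcategory of infinitely connective objects, equipped with the induced t-structure. Then q restricts to an equivalence on eventually coconnective objects: C^+ ≃ (C/C^{≤-∞})^+. -/

import Mathlib

open CategoryTheory Limits Pretriangulated Triangulated

namespace CategoryTheory.Triangulated

structure Subcategory (C : Type*) [Category C] [Preadditive C] [HasZeroObject C] [HasShift C ℤ]
    [∀ n : ℤ, (shiftFunctor C n).Additive] [Pretriangulated C] where
  P : C → Prop
  zero' : ∃ (Z : C) (_ : IsZero Z), P Z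
  shift (X : C) (n : ℤ) : P X → P (X⟦n⟧)
  ext₂' (T : Triangle C) (_ : T ∈ distTriang C) : P T.obj₁ → P T.obj₃ →
    ObjectProperty.isoClosure P T.obj₂

namespace Subcategory

def W {C : Type*} [Category C] [Preadditive C] [HasZeroObject C] [HasShift C ℤ]
    [∀ n : ℤ, (shiftFunctor C n).Additive] [Pretriangulated C] (S : Subcategory C) :
    MorphismProperty C :=
  fun X Y f => ∃ (Z : C) (g : Y ⟶ Z) (h : Z ⟶ X⟦(1 : ℤ)⟧)
    (_ : Triangle.mk f g h ∈ distTriang C), S.P Z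

end Subcategory

end CategoryTheory.Triangulated

section LocalAux

universe w₁ w₂ u₁ u₂

variable {C : Type u₁} [Category.{w₁} C] {D : Type u₂} [Category.{w₂} D]

/-- A localization functor induces a bijection on morphisms into a `W`-local object. -/
lemma aux_bijective_map_of_local (W : MorphismProperty C) (L : C ⥤ D) [L.IsLocalization W]
    (y : C)
    (hy : ∀ ⦃A B : C⦄ (w : A ⟶ B), W w → Function.Bijective (fun g : B ⟶ y => w ≫ g))
    (x : C) : Function.Bijective (fun f : x ⟶ y => L.map f) := by
  let F : Cᵒᵖ ⥤ Type (max w₁ w₂) := yoneda.obj y ⋙ uliftFunctor.{w₂}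
  have hF : W.op.IsInvertedBy F := by
    rintro A B w hw
    rw [isIso_iff_bijective]
    have h := hy w.unop hw
    constructor
    · rintro ⟨a⟩ ⟨b⟩ hab
      have : w.unop ≫ a = w.unop ≫ b := congrArg ULift.down hab
      exact congrArg ULift.up (h.1 this)
    · rintro ⟨b⟩
      obtain ⟨g, hg⟩ := h.2 b
      exact ⟨⟨g⟩, congrArg ULift.up hg⟩
  let G : Dᵒᵖ ⥤ Type (max w₁ w₂) := Localization.lift F hF L.op
  let G' : Dᵒᵖ ⥤ Type (max w₁ w₂) := yoneda.obj (L.obj y) ⋙ uliftFunctor.{w₁}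
  letI : Localization.Lifting L.op W.op (L.op ⋙ G') G' := ⟨Iso.refl _⟩
  let e : L.op ⋙ G ≅ F := Localization.Lifting.iso L.op W.op F G
  let α : F ⟶ L.op ⋙ G' :=
    { app := fun X => TypeCat.ofHom (fun f => ⟨L.map f.down⟩)
      naturality := by
        intro X X' φ
        ext f
        exact congrArg ULift.up (L.map_comp φ.unop f.down) }
  let β : G ⟶ G' := Localization.liftNatTrans L.op W.op F (L.op ⋙ G') G G' α
  let u : G.obj (Opposite.op (L.obj y)) := e.inv.app (Opposite.op y) ⟨𝟙 y⟩
  have heu : e.hom.app (Opposite.op y) u = ⟨𝟙 y⟩ := by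
    have := types_congr_hom (e.inv_hom_id_app (Opposite.op y)) ⟨𝟙 y⟩
    exact this
  have key1 : ∀ f : x ⟶ y,
      e.hom.app (Opposite.op x) (G.map (L.map f).op u) = ⟨f⟩ := by
    intro f
    have hnat := types_congr_hom (e.hom.naturality f.op) u
    have h1 : (L.op ⋙ G).map f.op = G.map (L.map f).op := rfl
    rw [h1] at hnat
    dsimp at hnat ⊢
    rw [hnat, heu]
    exact congrArg ULift.up (Category.comp_id f)
  have key2 : ∀ (d : D) (g : d ⟶ L.obj y),
      β.app (Opposite.op d) (G.map g.op u) = ⟨g⟩ := by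
    intro d g
    have hnat := types_congr_hom (β.naturality g.op) u
    dsimp at hnat
    rw [hnat]
    have happ : β.app (Opposite.op (L.obj y)) u = ⟨𝟙 (L.obj y)⟩ := by
      have h := types_congr_hom (Localization.liftNatTrans_app L.op W.op F (L.op ⋙ G') G G' α
        (Opposite.op y)) u
      dsimp at h
      rw [h]
      have : (Localization.Lifting.iso L.op W.op F G).hom.app (Opposite.op y) u = ⟨𝟙 y⟩ := heu
      rw [this]
      have hrfl : (Localization.Lifting.iso L.op W.op (L.op ⋙ G') G') = Iso.refl _ := rfl
      simp only [hrfl]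
      exact congrArg ULift.up (L.map_id y)
    rw [happ]
    exact congrArg ULift.up (Category.comp_id g)
  constructor
  · intro f₁ f₂ h
    have h12 : (⟨f₁⟩ : ULift.{w₂} (x ⟶ y)) = ⟨f₂⟩ := by
      rw [← key1 f₁, ← key1 f₂, show L.map f₁ = L.map f₂ from h]
    exact ULift.up_injective h12
  · intro φ
    let s := G.map φ.op u
    let f : x ⟶ y := (e.hom.app (Opposite.op x) s).down
    have hf : e.hom.app (Opposite.op x) s = ⟨f⟩ := rfl
    refine ⟨f, ?_⟩
    have hinj : Function.Injective (e.hom.app (Opposite.op x)) :=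
      ((isIso_iff_bijective _).1 (inferInstanceAs (IsIso (e.hom.app (Opposite.op x))))).1
    have : G.map (L.map f).op u = s := hinj (by rw [key1 f, hf])
    have h12 : (⟨L.map f⟩ : ULift.{w₁} (L.obj x ⟶ L.obj y)) = ⟨φ⟩ := by
      rw [← key2 (L.obj x) (L.map f), ← key2 (L.obj x) φ, this]
    exact ULift.up_injective h12

end LocalAux

section ZeroAux

variable {C : Type*} [Category C] [Preadditive C] [HasZeroObject C] [HasShift C ℤ]
  [∀ n : ℤ, (shiftFunctor C n).Additive] [Pretriangulated C]

lemma aux_tstructure_zero (t : TStructure C) {X Y : C} (f : X ⟶ Y) (a b : ℤ) (hab : a < b)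
    (hX : t.le a X) (hY : t.ge b Y) : f = 0 := by
  have hX' : t.le 0 (X⟦a⟧) := t.le_shift a a 0 (by omega) X hX
  have hY' : t.ge (b - a) (Y⟦a⟧) := t.ge_shift b a (b - a) (by omega) Y hY
  have hY'' : t.ge 1 (Y⟦a⟧) := t.ge_antitone (by omega) _ hY'
  have hz := t.zero' ((shiftFunctor C a).map f) hX' hY''
  apply (shiftFunctor C a).map_injective
  rw [hz, Functor.map_zero]

end ZeroAux

variable {C : Type*} [Category C] [Preadditive C] [HasZeroObject C] [HasShift C ℤ]
  [∀ n : ℤ, (shiftFunctor C n).Additive] [Pretriangulated C]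
variable {D : Type*} [Category D]

/-- Let `C` be a stable (pretriangulated) category with a
t-structure `t`, let `S` be the triangulated subcategory of infinitely connective
objects (`S.P X ↔ X ∈ ∩ₙ C^{≤n}`), and let `q : C ⥤ D` be the Verdier quotient of
`C` by `S` (i.e. the localization at `S.W`).  With the induced t-structure on the
quotient (whose coconnectivity predicate is `quotGE`), `q` restricts to an
equivalence on eventually coconnective objects `C⁺ ≃ (C/C^{≤-∞})⁺`: for all `x` and
all eventually coconnective `y`, `Hom(x, y) → Hom(q x, q y)` is a bijection, and
every eventually coconnective object of the quotient lifts to an eventually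
coconnective object of `C`. -/
theorem verdier_quotient_by_infinitely_connective_equiv_on_coconnective
    (t : TStructure C) (S : Subcategory C)
    (hS : ∀ X : C, S.P X ↔ ∀ n : ℤ, t.le n X)
    (q : C ⥤ D) [q.IsLocalization S.W]
    -- the induced coconnectivity predicate on the Verdier quotient
    (quotGE : ℤ → D → Prop)
    (hquotGE : ∀ (n : ℤ) (Z : D),
      quotGE n Z ↔ ∃ Y : C, t.ge n Y ∧ Nonempty (q.obj Y ≅ Z)) :
    (∀ (x y : C), (∃ n : ℤ, t.ge n y) →
      Function.Bijective (fun f : x ⟶ y => q.map f)) ∧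
    (∀ Z : D, (∃ n : ℤ, quotGE n Z) →
      ∃ (y : C) (n : ℤ), t.ge n y ∧ Nonempty (q.obj y ≅ Z)) := by
  constructor
  · rintro x y ⟨n, hn⟩
    apply aux_bijective_map_of_local S.W q
    rintro A B w ⟨Z, g, h, hT, hZ⟩
    have hZle : ∀ m : ℤ, t.le m Z := (hS Z).1 hZ
    constructor
    · intro g₁ g₂ hg
      have hsub : w ≫ (g₁ - g₂) = 0 := by
        rw [Preadditive.comp_sub, sub_eq_zero]
        exact hg
      obtain ⟨k, hk⟩ := Triangle.yoneda_exact₂ _ hT (g₁ - g₂) hsub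
      have hk0 : k = 0 := aux_tstructure_zero t k (n - 1) n (by omega) (hZle _) hn
      have : g₁ - g₂ = 0 := by
        rw [hk, hk0, comp_zero]
        rfl
      rw [sub_eq_zero] at this
      exact this
    · intro f
      have hT' := inv_rot_of_distTriang _ hT
      have hmor : (Triangle.mk w g h).invRotate.mor₁ ≫ f = 0 := by
        apply aux_tstructure_zero t _ (n - 1) n (by omega) _ hn
        exact t.le_shift (n - 2) (-1) (n - 1) (by omega) Z (hZle _)
      obtain ⟨g', hg'⟩ := Triangle.yoneda_exact₂ _ hT' f hmor
      exact ⟨g', hg'.symm⟩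
  · rintro Z ⟨n, hZ⟩
    obtain ⟨Y, hY, hiso⟩ := (hquotGE n Z).1 hZ
    exact ⟨Y, n, hY, hiso⟩
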